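/- Let a be a nonincreasing nonnegative integer list with even sum, and let a' be its corresponding graphic threshold list, obtained as the column sums of the digraphic Ferrers matrix of (a,a) (F_{ij}=1 iff (j ≤ a_i and j < i) or (j ≤ a_i+1 and j > i)). Then a is graphic if and only if a ≺ a'. -/

import Mathlib

open Finset

/-- Partial sum of the first `k` entries of `a`. -/
def partSum {n : ℕ} (a : Fin n → ℕ) (k : ℕ) : ℕ :=
  ∑ i : Fin n, if (i : ℕ) < k then a i else 0

/-- `a ≺ a'` : `a` is majorized by `a'`. -/
def Majorized {n : ℕ} (a a' : Fin n → ℕ) : Prop :=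
  (∀ k : ℕ, partSum a k ≤ partSum a' k) ∧ ∑ i, a i = ∑ i, a' i

/-- `a` is nonincreasing. -/
def Nonincreasing {n : ℕ} (a : Fin n → ℕ) : Prop :=
  ∀ i j : Fin n, i ≤ j → a j ≤ a i

/-- `b` is nondecreasing. -/
def Nondecreasing {n : ℕ} (b : Fin n → ℕ) : Prop :=
  ∀ i j : Fin n, i ≤ j → b i ≤ b j

/-- `a` is obtained from `a'` by a unit `(i,j)`-transfer. -/
def UnitTransfer {n : ℕ} (a' a : Fin n → ℕ) (i j : Fin n) : Prop :=
  i < j ∧ a' j + 2 ≤ a' i ∧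
  a = Function.update (Function.update a' i (a' i - 1)) j (a' j + 1)

/-- Row sum of a 0-1 matrix. -/
def rowSum {n : ℕ} (M : Fin n → Fin n → Bool) (i : Fin n) : ℕ :=
  ∑ j, if M i j then 1 else 0

/-- Column sum of a 0-1 matrix. -/
def colSum {n : ℕ} (M : Fin n → Fin n → Bool) (j : Fin n) : ℕ :=
  ∑ i, if M i j then 1 else 0

/-- Number of loop-digraph realizations of `(a,b)`:
`n×n` 0-1 matrices with row sums `b` and column sums `a`. -/
noncomputable def N1 {n : ℕ} (a b : Fin n → ℕ) : ℕ :=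
  Nat.card {M : Fin n → Fin n → Bool //
    (∀ i, rowSum M i = b i) ∧ (∀ j, colSum M j = a j)}

def LoopDigraphic {n : ℕ} (a b : Fin n → ℕ) : Prop := 0 < N1 a b

/-- Number of digraph realizations of `(a,b)`:
`n×n` 0-1 matrices with zero diagonal, row sums `b` and column sums `a`. -/
noncomputable def N2 {n : ℕ} (a b : Fin n → ℕ) : ℕ :=
  Nat.card {M : Fin n → Fin n → Bool //
    (∀ i, M i i = false) ∧ (∀ i, rowSum M i = b i) ∧ (∀ j, colSum M j = a j)}

def Digraphic {n : ℕ} (a b : Fin n → ℕ) : Prop := 0 < N2 a b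

/-- Number of simple graph realizations of `a` (symmetric 0-1 adjacency matrices
with zero diagonal and degrees `a`). -/
noncomputable def N3 {n : ℕ} (a : Fin n → ℕ) : ℕ :=
  Nat.card {M : Fin n → Fin n → Bool //
    (∀ i j, M i j = M j i) ∧ (∀ i, M i i = false) ∧ (∀ i, rowSum M i = a i)}

def Graphic {n : ℕ} (a : Fin n → ℕ) : Prop := 0 < N3 a

/-- The minconvex list for parameters `n, m`. -/
def minconvex (n m : ℕ) : Fin n → ℕ :=
  fun i => if (i : ℕ) < m % n then m / n + 1 else m / n

/-- `(a,b)` is lexicographically nonincreasing. -/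
def LexNonincreasing {n : ℕ} (a b : Fin n → ℕ) : Prop :=
  ∀ i j : Fin n, i ≤ j → (a j < a i ∨ (a i = a j ∧ b j ≤ b i))


/-- Column sums of the digraphic Ferrers matrix of `(a,a)` (0-indexed). -/
def thresholdList {n : ℕ} (a : Fin n → ℕ) (j : Fin n) : ℕ :=
  (Finset.univ.filter (fun i : Fin n =>
    ((j : ℕ) < a i ∧ j < i) ∨ ((j : ℕ) ≤ a i ∧ i < j))).card

/-- The Erdős–Gallai right-hand side. -/
def egR {n : ℕ} (a : Fin n → ℕ) (k : ℕ) : ℕ :=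
  ∑ i : Fin n, if (i : ℕ) < k then min (a i) (k - 1) else min (a i) k

lemma sum_fin_eq_range {n : ℕ} (f : ℕ → ℕ) :
    (∑ i : Fin n, f i.val) = ∑ t ∈ Finset.range n, f t :=
  Fin.sum_univ_eq_sum_range f n

/-- count of indices of Fin n below k -/
lemma card_below {n k : ℕ} (hk : k ≤ n) :
    (∑ i : Fin n, if (i : ℕ) < k then 1 else 0) = k := by
  rw [sum_fin_eq_range (fun t => if t < k then 1 else 0), ← Finset.sum_filter]
  have : (Finset.range n).filter (fun t => t < k) = Finset.range k := by
    ext t; simp [Finset.mem_filter, Finset.mem_range]; omega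
  simp [this]

/-- row count of the Ferrers matrix restricted to columns < k -/
lemma ferrers_row_count {n k : ℕ} (hk : k ≤ n) (A I : ℕ) (hI : I < n) :
    (∑ t ∈ Finset.range n, if t < k ∧ ((t < A ∧ t < I) ∨ (t ≤ A ∧ I < t)) then 1 else 0)
      = if I < k then min A (k - 1) else min A k := by
  rw [← Finset.sum_filter]
  simp only [Finset.sum_const, smul_eq_mul, mul_one]
  rcases le_or_gt A I with hAI | hAI
  · have hset : (Finset.range n).filter
        (fun t => t < k ∧ ((t < A ∧ t < I) ∨ (t ≤ A ∧ I < t))) = Finset.range (min A k) := by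
      ext t; simp only [Finset.mem_filter, Finset.mem_range, lt_min_iff]; omega
    rw [hset, Finset.card_range]
    split <;> omega
  · have hset : (Finset.range n).filter
        (fun t => t < k ∧ ((t < A ∧ t < I) ∨ (t ≤ A ∧ I < t)))
        = (Finset.range (min (A+1) k)).erase I := by
      ext t; simp only [Finset.mem_filter, Finset.mem_range, Finset.mem_erase, lt_min_iff]; omega
    rw [hset]
    rcases lt_or_ge I (min (A+1) k) with h | h
    · rw [Finset.card_erase_of_mem (by simpa using h), Finset.card_range]
      split <;> omega
    · rw [Finset.erase_eq_of_notMem (by simp only [Finset.mem_range]; omega), Finset.card_range]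
      split <;> omega

/-- master identity: partial sums of the threshold list. -/
lemma partSum_thresholdList {n : ℕ} (a : Fin n → ℕ) {k : ℕ} (hk : k ≤ n) :
    partSum (thresholdList a) k = egR a k := by
  unfold partSum thresholdList egR
  have step1 : ∀ j : Fin n,
      (if (j : ℕ) < k then
        ((Finset.univ.filter (fun i : Fin n =>
          ((j : ℕ) < a i ∧ j < i) ∨ ((j : ℕ) ≤ a i ∧ i < j))).card) else 0)
      = ∑ i : Fin n, if (j : ℕ) < k ∧ (((j : ℕ) < a i ∧ j < i) ∨ ((j : ℕ) ≤ a i ∧ i < j))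
          then 1 else 0 := by
    intro j
    split
    · next h =>
      rw [Finset.card_filter]
      apply Finset.sum_congr rfl
      intro i _
      simp [h]
    · next h => simp [h]
  rw [Finset.sum_congr rfl (fun j _ => step1 j), Finset.sum_comm]
  apply Finset.sum_congr rfl
  intro i _
  have : (∑ j : Fin n, if (j : ℕ) < k ∧ (((j:ℕ) < a i ∧ j < i) ∨ ((j:ℕ) ≤ a i ∧ i < j))
      then 1 else 0)
      = ∑ t ∈ Finset.range n, if t < k ∧ ((t < a i ∧ t < (i:ℕ)) ∨ (t ≤ a i ∧ (i:ℕ) < t))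
          then 1 else 0 := by
    rw [← sum_fin_eq_range (fun t => if t < k ∧ ((t < a i ∧ t < (i:ℕ)) ∨ (t ≤ a i ∧ (i:ℕ) < t)) then 1 else 0)]
    apply Finset.sum_congr rfl
    intro j _
    simp only [Fin.lt_def]
  rw [this, ferrers_row_count hk (a i) i.val i.isLt]


lemma partSum_of_le {n : ℕ} (a : Fin n → ℕ) {k : ℕ} (hk : n ≤ k) :
    partSum a k = ∑ i, a i := by
  unfold partSum
  apply Finset.sum_congr rfl
  intro i _
  rw [if_pos (lt_of_lt_of_le i.isLt hk)]

lemma egR_n {n : ℕ} (a : Fin n → ℕ) : egR a n = ∑ i, min (a i) (n - 1) := by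
  unfold egR
  apply Finset.sum_congr rfl
  intro i _
  rw [if_pos i.isLt]

/-- The Erdős–Gallai style characterization of majorization by the threshold list. -/
lemma majorized_iff_eg {n : ℕ} (a : Fin n → ℕ) :
    Majorized a (thresholdList a) ↔
      ((∀ i, a i ≤ n - 1) ∧ ∀ k ≤ n, partSum a k ≤ egR a k) := by
  constructor
  · rintro ⟨hpart, hsum⟩
    have hs : ∑ i, a i = ∑ i, min (a i) (n - 1) := by
      rw [hsum, ← partSum_of_le (thresholdList a) le_rfl, partSum_thresholdList a le_rfl,
        egR_n]
    constructor
    · intro i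
      by_contra hlt
      push_neg at hlt
      have : ∑ i, min (a i) (n-1) < ∑ i, a i := by
        apply Finset.sum_lt_sum (fun j _ => min_le_left _ _)
        exact ⟨i, Finset.mem_univ i, by omega⟩
      omega
    · intro k hk
      rw [← partSum_thresholdList a hk]
      exact hpart k
  · rintro ⟨hle, hEG⟩
    have hsum : ∑ i, a i = ∑ i, thresholdList a i := by
      rw [← partSum_of_le (thresholdList a) le_rfl, partSum_thresholdList a le_rfl, egR_n]
      exact Finset.sum_congr rfl (fun i _ => (min_eq_left (hle i)).symm)
    refine ⟨fun k => ?_, hsum⟩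
    rcases le_or_gt k n with h | h
    · rw [partSum_thresholdList a h]; exact hEG k h
    · rw [partSum_of_le a (le_of_lt h), partSum_of_le (thresholdList a) (le_of_lt h), hsum]


section nec
variable {n : ℕ} (M : Fin n → Fin n → Bool)

lemma rowSum_le_pred (hdiag : ∀ i, M i i = false) (i : Fin n) :
    rowSum M i ≤ n - 1 := by
  unfold rowSum
  calc ∑ j, (if M i j then 1 else 0)
      ≤ ∑ j : Fin n, (if j = i then 0 else 1) := by
        apply Finset.sum_le_sum
        intro j _
        by_cases hj : j = i
        · subst hj; simp [hdiag]
        · simp [hj]; split <;> omega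
    _ = n - 1 := by
        have h2 : (∑ j : Fin n, if j = i then (0:ℕ) else 1)
            = ∑ j ∈ Finset.univ.erase i, (if j = i then (0:ℕ) else 1) := by
          rw [← Finset.add_sum_erase _ _ (Finset.mem_univ i)]
          simp
        rw [h2]
        rw [Finset.sum_congr rfl (fun j hj => if_neg (Finset.mem_erase.mp hj).1)]
        simp [Finset.card_erase_of_mem]

lemma partSum_le_egR (hsym : ∀ i j, M i j = M j i) (hdiag : ∀ i, M i i = false)
    (a : Fin n → ℕ) (hdeg : ∀ i, rowSum M i = a i) {k : ℕ} (hk : k ≤ n) :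
    partSum a k ≤ egR a k := by
  unfold partSum egR
  have lhs : (∑ i : Fin n, if (i:ℕ) < k then a i else 0)
      = ∑ j : Fin n, ∑ i : Fin n, (if (i:ℕ) < k ∧ M i j then 1 else 0) := by
    rw [Finset.sum_comm]
    apply Finset.sum_congr rfl
    intro i _
    by_cases h : (i:ℕ) < k
    · rw [if_pos h, ← hdeg i]
      unfold rowSum
      apply Finset.sum_congr rfl
      intro j _
      simp [h]
    · simp [h]
  rw [lhs]
  apply Finset.sum_le_sum
  intro j _
  have b1 : (∑ i : Fin n, if (i:ℕ) < k ∧ M i j then 1 else 0) ≤ a j := by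
    calc (∑ i : Fin n, if (i:ℕ) < k ∧ M i j then 1 else 0)
        ≤ ∑ i : Fin n, (if M j i then 1 else 0) := by
          apply Finset.sum_le_sum
          intro i _
          rw [hsym j i]
          split
          · next h => rw [if_pos h.2]
          · omega
      _ = a j := hdeg j
  have b2 : (∑ i : Fin n, if (i:ℕ) < k ∧ M i j then 1 else 0)
      ≤ k - (if (j:ℕ) < k then 1 else 0) := by
    calc (∑ i : Fin n, if (i:ℕ) < k ∧ M i j then 1 else 0)
        ≤ ∑ i : Fin n, (if (i:ℕ) < k ∧ i ≠ j then 1 else 0) := by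
          apply Finset.sum_le_sum
          intro i _
          split
          · next h =>
            have : i ≠ j := by
              rintro rfl
              rw [hdiag i] at h
              exact Bool.false_ne_true h.2
            rw [if_pos ⟨h.1, this⟩]
          · omega
      _ = ∑ t ∈ Finset.range n, (if t < k ∧ t ≠ (j:ℕ) then 1 else 0) := by
          rw [← sum_fin_eq_range (fun t => if t < k ∧ t ≠ (j:ℕ) then 1 else 0)]
          apply Finset.sum_congr rfl
          intro i _
          congr 2
          simp [Fin.ext_iff]
      _ = ((Finset.range k).erase (j:ℕ)).card := by
          rw [← Finset.sum_filter]
          have : (Finset.range n).filter (fun t => t < k ∧ t ≠ (j:ℕ))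
              = (Finset.range k).erase (j:ℕ) := by
            ext t
            simp only [Finset.mem_filter, Finset.mem_range, Finset.mem_erase]
            omega
          simp [this]
      _ ≤ k - (if (j:ℕ) < k then 1 else 0) := by
          split
          · next h =>
            rw [Finset.card_erase_of_mem (by simpa using h), Finset.card_range]
          · next h =>
            rw [Finset.erase_eq_of_notMem (by simpa using h), Finset.card_range]
            omega
  split
  · next h => rw [if_pos h] at b2; omega
  · next h => rw [if_neg h] at b2; omega
end nec


/-- toggle the symmetric pair of entries (p,q), (q,p). -/
def tog {n : ℕ} (M : Fin n → Fin n → Bool) (p q : Fin n) : Fin n → Fin n → Bool :=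
  fun i j => if (i = p ∧ j = q) ∨ (i = q ∧ j = p) then !(M i j) else M i j

section tg
variable {n : ℕ} (M : Fin n → Fin n → Bool) (p q : Fin n)

lemma tog_comm : tog M p q = tog M q p := by
  funext i j
  unfold tog
  exact if_congr or_comm rfl rfl

lemma tog_apply_ne {i j : Fin n} (h : ¬((i = p ∧ j = q) ∨ (i = q ∧ j = p))) :
    tog M p q i j = M i j := if_neg h

lemma tog_apply_pq : tog M p q p q = !(M p q) := by
  unfold tog
  rw [if_pos (Or.inl ⟨rfl, rfl⟩)]

lemma tog_symm (hsym : ∀ i j, M i j = M j i) (i j : Fin n) :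
    tog M p q i j = tog M p q j i := by
  unfold tog
  by_cases h : (i = p ∧ j = q) ∨ (i = q ∧ j = p)
  · rw [if_pos h, if_pos (by tauto), hsym i j]
  · rw [if_neg h, if_neg (by tauto), hsym i j]

lemma tog_diag (hpq : p ≠ q) (i : Fin n) : tog M p q i i = M i i := by
  apply tog_apply_ne
  rintro (⟨rfl, rfl⟩ | ⟨rfl, rfl⟩) <;> exact hpq rfl

lemma rowSum_tog_ne {i : Fin n} (hip : i ≠ p) (hiq : i ≠ q) :
    rowSum (tog M p q) i = rowSum M i := by
  unfold rowSum
  apply Finset.sum_congr rfl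
  intro j _
  rw [tog_apply_ne M p q (by tauto)]

lemma rowSum_split (X : Fin n → Fin n → Bool) (i c : Fin n) :
    rowSum X i = (if X i c then 1 else 0) + ∑ j ∈ Finset.univ.erase c, (if X i j then 1 else 0) := by
  unfold rowSum
  rw [← Finset.add_sum_erase _ _ (Finset.mem_univ c)]

lemma rowSum_tog_rest (hpq : p ≠ q) :
    ∑ j ∈ Finset.univ.erase q, (if tog M p q p j then 1 else 0)
      = ∑ j ∈ Finset.univ.erase q, (if M p j then 1 else 0) := by
  apply Finset.sum_congr rfl
  intro j hj
  rw [tog_apply_ne M p q]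
  rintro (⟨-, rfl⟩ | ⟨rfl, -⟩)
  · exact (Finset.mem_erase.mp hj).1 rfl
  · exact hpq rfl

lemma rowSum_tog_left_add (hpq : p ≠ q) (h : M p q = false) :
    rowSum (tog M p q) p = rowSum M p + 1 := by
  rw [rowSum_split (tog M p q) p q, rowSum_split M p q, rowSum_tog_rest M p q hpq,
    tog_apply_pq, h]
  simp [Nat.add_comm]

lemma rowSum_tog_left_sub (hpq : p ≠ q) (h : M p q = true) :
    rowSum (tog M p q) p + 1 = rowSum M p := by
  rw [rowSum_split (tog M p q) p q, rowSum_split M p q, rowSum_tog_rest M p q hpq,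
    tog_apply_pq, h]
  simp [Nat.add_comm, Nat.add_assoc]

lemma rowSum_tog_right_add (hpq : p ≠ q) (h : M q p = false) :
    rowSum (tog M p q) q = rowSum M q + 1 := by
  rw [tog_comm]
  exact rowSum_tog_left_add M q p (Ne.symm hpq) h

lemma rowSum_tog_right_sub (hpq : p ≠ q) (h : M q p = true) :
    rowSum (tog M p q) q + 1 = rowSum M q := by
  rw [tog_comm]
  exact rowSum_tog_left_sub M q p (Ne.symm hpq) h

end tg


lemma sum_if_window {n : ℕ} (lo hi : ℕ) (hhi : hi ≤ n) :
    (∑ i : Fin n, if lo ≤ (i : ℕ) ∧ (i : ℕ) < hi then 1 else 0) = hi - lo := by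
  rw [sum_fin_eq_range (fun t => if lo ≤ t ∧ t < hi then 1 else 0), ← Finset.sum_filter]
  have : (Finset.range n).filter (fun t => lo ≤ t ∧ t < hi) = Finset.Ico lo hi := by
    ext t
    simp only [Finset.mem_filter, Finset.mem_range, Finset.mem_Ico]
    omega
  simp [this, Nat.card_Ico]

lemma sum_const_below {n : ℕ} {k : ℕ} (hk : k ≤ n) (c : ℕ) :
    (∑ i : Fin n, if (i : ℕ) < k then c else 0) = k * c := by
  rw [sum_fin_eq_range (fun t => if t < k then c else 0), ← Finset.sum_filter]
  have : (Finset.range n).filter (fun t => t < k) = Finset.range k := by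
    ext t; simp only [Finset.mem_filter, Finset.mem_range]; omega
  simp [this, mul_comm]

lemma sum_split_if {n : ℕ} (k : ℕ) (f : Fin n → ℕ) :
    ∑ i, f i = (∑ i : Fin n, if (i : ℕ) < k then f i else 0)
      + ∑ i : Fin n, if (i : ℕ) < k then 0 else f i := by
  rw [← Finset.sum_add_distrib]
  apply Finset.sum_congr rfl
  intro i _
  split <;> omega

lemma tail_split {n : ℕ} {k : ℕ} (hk : k < n) (g : Fin n → ℕ) :
    (∑ i : Fin n, if (i : ℕ) < k then 0 else g i)
      = g ⟨k, hk⟩ + ∑ i : Fin n, if (i : ℕ) < k + 1 then 0 else g i := by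
  have h1 : (∑ i : Fin n, if (i : ℕ) < k then 0 else g i)
      = (fun i : Fin n => if (i : ℕ) < k then 0 else g i) ⟨k, hk⟩
        + ∑ i ∈ Finset.univ.erase ⟨k, hk⟩, (fun i : Fin n => if (i : ℕ) < k then 0 else g i) i :=
    (Finset.add_sum_erase _ _ (Finset.mem_univ _)).symm
  have h2 : (∑ i : Fin n, if (i : ℕ) < k + 1 then 0 else g i)
      = (fun i : Fin n => if (i : ℕ) < k + 1 then 0 else g i) ⟨k, hk⟩
        + ∑ i ∈ Finset.univ.erase ⟨k, hk⟩, (fun i : Fin n => if (i : ℕ) < k + 1 then 0 else g i) i :=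
    (Finset.add_sum_erase _ _ (Finset.mem_univ _)).symm
  have h3 : ∑ i ∈ Finset.univ.erase ⟨k, hk⟩, (fun i : Fin n => if (i : ℕ) < k then 0 else g i) i
      = ∑ i ∈ Finset.univ.erase ⟨k, hk⟩, (fun i : Fin n => if (i : ℕ) < k + 1 then 0 else g i) i := by
    apply Finset.sum_congr rfl
    intro i hi
    have hne : (i : ℕ) ≠ k := fun h => (Finset.mem_erase.mp hi).1 (Fin.ext h)
    simp only []
    rcases Nat.lt_or_ge (i : ℕ) k with h | h
    · rw [if_pos h, if_pos (by omega)]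
    · rw [if_neg (by omega), if_neg (by omega)]
  rw [h1, h2, h3]
  simp

lemma tail_ge_single {n : ℕ} (g : Fin n → ℕ) (w : Fin n) {k : ℕ} (hk : k ≤ (w : ℕ)) :
    g w ≤ ∑ i : Fin n, if (i : ℕ) < k then 0 else g i := by
  have := Finset.single_le_sum (f := fun i : Fin n => if (i : ℕ) < k then 0 else g i)
    (fun i _ => Nat.zero_le _) (Finset.mem_univ w)
  simpa [Nat.not_lt.mpr hk] using this

lemma sum_split_two {n : ℕ} {u v : Fin n} (huv : u ≠ v) (f : Fin n → ℕ) :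
    ∑ i, f i = f u + f v + ∑ i ∈ (Finset.univ.erase u).erase v, f i := by
  have h1 : ∑ i, f i = f u + ∑ i ∈ Finset.univ.erase u, f i :=
    (Finset.add_sum_erase _ _ (Finset.mem_univ _)).symm
  have h2 : ∑ i ∈ Finset.univ.erase u, f i
      = f v + ∑ i ∈ (Finset.univ.erase u).erase v, f i :=
    (Finset.add_sum_erase _ _ (Finset.mem_erase.mpr ⟨Ne.symm huv, Finset.mem_univ _⟩)).symm
  omega

lemma exists_true_of_rowsum_pos {n : ℕ} {M : Fin n → Fin n → Bool} {w : Fin n}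
    (h : 0 < ∑ j, if M w j then 1 else 0) : ∃ z, M w z = true := by
  by_contra hz
  push_neg at hz
  have : (∑ j, if M w j then 1 else 0) = 0 :=
    Finset.sum_eq_zero (fun j _ => by simp [hz j])
  omega


lemma tail_ge_pair {n : ℕ} (g : Fin n → ℕ) {u v : Fin n} (huv : u ≠ v) {k : ℕ}
    (hku : k ≤ (u : ℕ)) (hkv : k ≤ (v : ℕ)) :
    g u + g v ≤ ∑ i : Fin n, if (i : ℕ) < k then 0 else g i := by
  have h := sum_split_two huv (fun i : Fin n => if (i : ℕ) < k then 0 else g i)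
  have hu' : (if (u:ℕ) < k then (0:ℕ) else g u) = g u := if_neg (Nat.not_lt.mpr hku)
  have hv' : (if (v:ℕ) < k then (0:ℕ) else g v) = g v := if_neg (Nat.not_lt.mpr hkv)
  simp only [hu', hv'] at h
  omega

lemma eg_step {n : ℕ} (a : Fin n → ℕ) (u v : Fin n)
    (hmono : ∀ i j : Fin n, i ≤ j → a j ≤ a i)
    (huv : (u : ℕ) < (v : ℕ))
    (hblock : ∀ i : Fin n, (i : ℕ) ≤ (u : ℕ) → a i = a u)
    (hav : 0 < a v)
    (heven : Even (∑ i, a i))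
    (hEG : ∀ k ≤ n, partSum a k ≤ egR a k)
    {k : ℕ} (hk : k ≤ n) :
    partSum a k + ((if a u ≤ (if (u : ℕ) < k then k - 1 else k) then 1 else 0)
      + (if a v ≤ (if (v : ℕ) < k then k - 1 else k) then 1 else 0))
    ≤ egR a k + ((if (u : ℕ) < k then 1 else 0) + (if (v : ℕ) < k then 1 else 0)) := by
  set A := a u with hA
  have hle_uv : u ≤ v := by rw [Fin.le_def]; omega
  have hne_uv : u ≠ v := fun h => by rw [h] at huv; omega
  have hA_pos : 0 < A := lt_of_lt_of_le hav (hmono u v hle_uv)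
  have hmax : ∀ i : Fin n, a i ≤ A := by
    intro i
    rcases le_or_gt (i : ℕ) (u : ℕ) with h | h
    · rw [hblock i h]
    · exact hmono u i (by rw [Fin.le_def]; omega)
  have havA : a v ≤ A := hmax v
  -- k = 0 case
  rcases Nat.eq_zero_or_pos k with rfl | hk1
  · have h0 : partSum a 0 = 0 := by
      unfold partSum
      exact Finset.sum_eq_zero (fun i _ => by simp)
    simp only [Nat.not_lt_zero, if_false, h0]
    split_ifs <;> omega
  by_cases hvk : (v : ℕ) < k
  · -- both u, v below k
    have h := hEG k hk
    rw [if_pos (by omega : (u:ℕ) < k), if_pos hvk]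
    split_ifs <;> omega
  · push_neg at hvk
    rw [if_neg (by omega : ¬ (v:ℕ) < k)]
    have hkn' : k < n := by have := v.isLt; omega
    -- partial sums over constant initial block
    have hps' : ∀ k', k' ≤ (u : ℕ) + 1 → k' ≤ n → partSum a k' = k' * A := by
      intro k' h1 h2
      unfold partSum
      have hcg : (∑ i : Fin n, if (i : ℕ) < k' then a i else 0)
          = ∑ i : Fin n, if (i : ℕ) < k' then A else 0 := by
        apply Finset.sum_congr rfl
        intro i _
        by_cases hi : (i:ℕ) < k'
        · rw [if_pos hi, if_pos hi, hblock i (by omega)]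
        · rw [if_neg hi, if_neg hi]
      rw [hcg]
      exact sum_const_below h2 A
    by_cases huk : (u : ℕ) < k
    · -- Case C : u < k ≤ v
      rw [if_pos huk]
      by_cases hC : A ≤ k - 1
      · -- all entries ≤ k-1
        have hegR : egR a k = partSum a k + ∑ i : Fin n, (if (i:ℕ) < k then 0 else a i) := by
          unfold egR partSum
          rw [← Finset.sum_add_distrib]
          apply Finset.sum_congr rfl
          intro i _
          have hi := hmax i
          split <;> omega
        have htail := tail_ge_single a v hvk
        rw [if_pos hC]
        split_ifs <;> omega
      · rw [if_neg hC]
        have h := hEG k hk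
        split_ifs <;> omega
    · -- k ≤ u
      push_neg at huk
      rw [if_neg (by omega : ¬ (u:ℕ) < k)]
      have hps : partSum a k = k * A := hps' k (by omega) hk
      by_cases hAk : A ≤ k
      · -- Subcase A : prove partSum + 2 ≤ egR
        suffices hsuf : partSum a k + 2 ≤ egR a k by split_ifs <;> omega
        have hegR : egR a k = k * (min A (k-1)) + ∑ i : Fin n, (if (i:ℕ) < k then 0 else a i) := by
          unfold egR
          rw [show (∑ i : Fin n, if (i : ℕ) < k then min (a i) (k - 1) else min (a i) k)
              = (∑ i : Fin n, if (i:ℕ) < k then min A (k-1) else 0)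
                + ∑ i : Fin n, (if (i:ℕ) < k then 0 else a i) from by
            rw [← Finset.sum_add_distrib]
            apply Finset.sum_congr rfl
            intro i _
            have hi := hmax i
            by_cases h : (i:ℕ) < k
            · rw [if_pos h, if_pos h, if_pos h, hblock i (by omega)]
              omega
            · rw [if_neg h, if_neg h, if_neg h]
              omega]
          rw [sum_const_below hk]
        set S := ∑ i : Fin n, (if (i:ℕ) < k then 0 else a i) with hS
        rcases Nat.lt_or_ge A k with hAlt | hAge
        · -- A < k : S ≥ 2 suffices
          have hmin : min A (k-1) = A := by omega
          have hpair := tail_ge_pair a hne_uv huk hvk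
          rw [hegR, hmin, hps]
          omega
        · -- A = k
          have hAeq : A = k := by omega
          have hmin : min A (k-1) = k - 1 := by omega
          have hkk : k * (k-1) + k = k * k := by
            have h1 : k * (k-1) = k * k - k := by
              rw [Nat.mul_sub]
              omega
            have h2 : k ≤ k * k := Nat.le_mul_of_pos_left k hk1
            omega
          -- S ≥ k + 2
          have hSksplit : S = A + ∑ i : Fin n, (if (i:ℕ) < k + 1 then 0 else a i) := by
            rw [hS, tail_split hkn' a, hblock ⟨k, hkn'⟩ (by show k ≤ (u:ℕ); omega)]
          set T := ∑ i : Fin n, (if (i:ℕ) < k + 1 then 0 else a i) with hT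
          have hTv : a v ≤ T := by
            rcases Nat.lt_or_ge k (u:ℕ) with hku | hku
            · have hpair := tail_ge_pair a hne_uv (by omega : k+1 ≤ (u:ℕ)) (by omega : k+1 ≤ (v:ℕ))
              omega
            · exact tail_ge_single a v (by omega)
          have hST : k + 2 ≤ S := by
            rcases Nat.lt_or_ge k (u:ℕ) with hku | hku
            · -- u > k : T ≥ a u + a v = A + a v
              have hpair := tail_ge_pair a hne_uv (by omega : k+1 ≤ (u:ℕ)) (by omega : k+1 ≤ (v:ℕ))
              omega
            · -- u = k : parity
              have hsplit := sum_split_if (k+1) a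
              have hps2 : partSum a (k+1) = (k+1) * A := hps' (k+1) (by omega) (by omega)
              obtain ⟨c, hc⟩ := heven
              obtain ⟨d, hd⟩ := Nat.even_mul_succ_self k
              have hcomm : (k+1) * A = k * (k+1) := by rw [hAeq]; ring
              unfold partSum at hps2 hsplit
              omega
          rw [hegR, hmin, hps, hAeq, ← hkk]
          omega
      · -- Subcase B : A > k
        by_cases hBk : a v ≤ k
        · -- need partSum + 1 ≤ egR
          suffices hsuf : partSum a k + 1 ≤ egR a k by
            rw [if_neg (by omega : ¬ A ≤ k)]
            split_ifs <;> omega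
          by_contra hcon
          push_neg at hcon
          have hEq : egR a k = partSum a k := le_antisymm (by omega) (hEG k hk)
          have hegR : egR a k = k * (k-1)
              + ∑ i : Fin n, (if (i:ℕ) < k then 0 else min (a i) k) := by
            unfold egR
            rw [show (∑ i : Fin n, if (i : ℕ) < k then min (a i) (k - 1) else min (a i) k)
                = (∑ i : Fin n, if (i:ℕ) < k then k - 1 else 0)
                  + ∑ i : Fin n, (if (i:ℕ) < k then 0 else min (a i) k) from by
              rw [← Finset.sum_add_distrib]
              apply Finset.sum_congr rfl
              intro i _
              by_cases h : (i:ℕ) < k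
              · rw [if_pos h, if_pos h, if_pos h, hblock i (by omega)]
                omega
              · rw [if_neg h, if_neg h, if_neg h]
                omega]
            rw [sum_const_below hk]
          have hsplitmin : (∑ i : Fin n, (if (i:ℕ) < k then 0 else min (a i) k))
              = k + ∑ i : Fin n, (if (i:ℕ) < k + 1 then 0 else min (a i) k) := by
            rw [tail_split hkn' (fun i => min (a i) k)]
            rw [hblock ⟨k, hkn'⟩ (by show k ≤ (u:ℕ); omega)]
            have : min A k = k := by omega
            rw [this]
          set P := ∑ i : Fin n, (if (i:ℕ) < k + 1 then 0 else min (a i) k) with hP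
          have hkk : k * (k-1) + k = k * k := by
            have h1 : k * (k-1) = k * k - k := by rw [Nat.mul_sub]; omega
            have h2 : k ≤ k * k := Nat.le_mul_of_pos_left k hk1
            omega
          -- E1' : k * A = k * k + P
          have hE1 : k * A = k * k + P := by
            rw [hps] at hEq
            omega
          -- hEG at k+1
          have hk1n : k + 1 ≤ n := by omega
          have hps2 : partSum a (k+1) = (k+1) * A := hps' (k+1) (by omega) hk1n
          have hegR2 : egR a (k+1) = (k+1) * k
              + ∑ i : Fin n, (if (i:ℕ) < k + 1 then 0 else min (a i) (k+1)) := by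
            unfold egR
            rw [show (∑ i : Fin n, if (i : ℕ) < k + 1 then min (a i) (k + 1 - 1) else min (a i) (k+1))
                = (∑ i : Fin n, if (i:ℕ) < k + 1 then k else 0)
                  + ∑ i : Fin n, (if (i:ℕ) < k + 1 then 0 else min (a i) (k+1)) from by
              rw [← Finset.sum_add_distrib]
              apply Finset.sum_congr rfl
              intro i _
              by_cases h : (i:ℕ) < k + 1
              · rw [if_pos h, if_pos h, if_pos h, hblock i (by omega)]
                omega
              · rw [if_neg h, if_neg h, if_neg h]
                omega]
            rw [sum_const_below hk1n]
          set S2 := ∑ i : Fin n, (if (i:ℕ) < k + 1 then 0 else min (a i) (k+1)) with hS2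
          set q := ∑ i : Fin n, (if (i:ℕ) < k + 1 then 0 else (if k + 1 ≤ a i then 1 else 0)) with hq
          have hS2le : S2 ≤ P + q := by
            rw [hS2, hP, hq, ← Finset.sum_add_distrib]
            apply Finset.sum_le_sum
            intro i _
            by_cases h : (i:ℕ) < k + 1
            · rw [if_pos h, if_pos h, if_pos h]
            · rw [if_neg h, if_neg h, if_neg h]
              by_cases hbig : k + 1 ≤ a i
              · rw [if_pos hbig]
                omega
              · rw [if_neg hbig]
                omega
          have hPge : k * q + a v ≤ P := by
            have hterm : ∀ i : Fin n,
                (if (i:ℕ) < k + 1 then 0 else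
                  (k * (if k + 1 ≤ a i then 1 else 0) + (if i = v then a v else 0)))
                ≤ (if (i:ℕ) < k + 1 then 0 else min (a i) k) := by
              intro i
              by_cases h : (i:ℕ) < k + 1
              · rw [if_pos h, if_pos h]
              · rw [if_neg h, if_neg h]
                by_cases hiv : i = v
                · rw [hiv, if_pos rfl, if_neg (by omega : ¬ k + 1 ≤ a v)]
                  simp only [Nat.mul_zero]
                  omega
                · rw [if_neg hiv]
                  by_cases hbig : k + 1 ≤ a i
                  · rw [if_pos hbig, Nat.mul_one]
                    omega
                  · rw [if_neg hbig, Nat.mul_zero]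
                    omega
            have hsum := Finset.sum_le_sum (s := Finset.univ) (fun i _ => hterm i)
            have hGsplit : (∑ i : Fin n, (if (i:ℕ) < k + 1 then 0 else
                  (k * (if k + 1 ≤ a i then 1 else 0) + (if i = v then a v else 0))))
                = k * q + a v := by
              rw [show (∑ i : Fin n, (if (i:ℕ) < k + 1 then 0 else
                    (k * (if k + 1 ≤ a i then 1 else 0) + (if i = v then a v else 0))))
                  = (∑ i : Fin n, (if (i:ℕ) < k + 1 then 0 else
                      k * (if k + 1 ≤ a i then 1 else 0)))
                    + ∑ i : Fin n, (if i = v then a v else 0) from by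
                rw [← Finset.sum_add_distrib]
                apply Finset.sum_congr rfl
                intro i _
                by_cases h : (i:ℕ) < k + 1
                · rw [if_pos h, if_pos h, if_neg (by
                    rintro rfl
                    omega)]
                · rw [if_neg h, if_neg h]]
              have h1 : (∑ i : Fin n, (if (i:ℕ) < k + 1 then 0 else
                    k * (if k + 1 ≤ a i then 1 else 0))) = k * q := by
                rw [hq, Finset.mul_sum]
                apply Finset.sum_congr rfl
                intro i _
                by_cases h : (i:ℕ) < k + 1
                · rw [if_pos h, if_pos h, Nat.mul_zero]
                · rw [if_neg h, if_neg h]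
              have h2 : (∑ i : Fin n, (if i = v then a v else 0)) = a v := by
                rw [Finset.sum_ite_eq' Finset.univ v (fun _ => a v)]
                simp
              omega
            rw [hGsplit] at hsum
            rw [hP]
            exact hsum
          -- final arithmetic
          have hEG2 := hEG (k+1) hk1n
          rw [hps2, hegR2] at hEG2
          have hm1 : (k+1) * A = k * A + A := by ring
          have hm2 : (k+1) * k = k * k + k := by ring
          have hAle : A ≤ k + q := by omega
          have hmul : k * A ≤ k * (k + q) := Nat.mul_le_mul_left k hAle
          have hm3 : k * (k + q) = k * k + k * q := by ring
          omega
        · rw [if_neg (by omega : ¬ A ≤ k), if_neg hBk]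
          have h := hEG k hk
          omega


lemma count_erase_lt {n m : ℕ} (u : Fin n) (hm : m ≤ n) (hu : (u:ℕ) < m) :
    (∑ i : Fin n, if (i:ℕ) < m ∧ i ≠ u then 1 else 0) = m - 1 := by
  have h0 : (∑ i : Fin n, if (i:ℕ) < m ∧ i ≠ u then 1 else 0)
      = ∑ i : Fin n, (fun t : ℕ => if t < m ∧ t ≠ (u:ℕ) then 1 else 0) i.val := by
    apply Finset.sum_congr rfl
    intro i _
    simp only [ne_eq, Fin.ext_iff]
  rw [h0, Fin.sum_univ_eq_sum_range (fun t => if t < m ∧ t ≠ (u:ℕ) then 1 else 0) n,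
    ← Finset.sum_filter]
  have h1 : (Finset.range n).filter (fun t => t < m ∧ t ≠ (u:ℕ))
      = (Finset.range m).erase (u:ℕ) := by
    ext t
    simp only [Finset.mem_filter, Finset.mem_range, Finset.mem_erase]
    omega
  rw [h1, Finset.sum_const, smul_eq_mul, mul_one,
    Finset.card_erase_of_mem (by simpa using hu), Finset.card_range]

/-- The surgery step: from a realization of `b` to a realization of `a`. -/
lemma graphic_step {n : ℕ} (a b : Fin n → ℕ) (u v : Fin n)
    (hmono : ∀ i j : Fin n, i ≤ j → a j ≤ a i)
    (huv : (u : ℕ) < (v : ℕ))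
    (hav : 0 < a v)
    (hzero : ∀ i : Fin n, (v:ℕ) < (i:ℕ) → a i = 0)
    (hauv : a u ≤ (v:ℕ))
    (hbu : b u + 1 = a u) (hbv : b v + 1 = a v)
    (hbne : ∀ i, i ≠ u → i ≠ v → b i = a i)
    (hGb : Graphic b) : Graphic a := by
  have hne_uv : u ≠ v := fun h => by rw [h] at huv; omega
  obtain ⟨⟨M, hsym, hdiag, hdeg⟩⟩ :
      Nonempty {M : Fin n → Fin n → Bool //
        (∀ i j, M i j = M j i) ∧ (∀ i, M i i = false) ∧ (∀ i, rowSum M i = b i)} :=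
    (Nat.card_pos_iff.mp hGb).1
  cases hMuv : M u v with
  | false =>
    -- just add the edge {u,v}
    refine Nat.card_pos_iff.mpr ⟨⟨⟨tog M u v, tog_symm M u v hsym,
      (fun i => (tog_diag M u v hne_uv i).trans (hdiag i)), fun i => ?_⟩⟩, inferInstance⟩
    by_cases hiu : i = u
    · rw [hiu, rowSum_tog_left_add M u v hne_uv hMuv, hdeg u]
      omega
    · by_cases hiv : i = v
      · rw [hiv, rowSum_tog_right_add M u v hne_uv (by rw [hsym]; exact hMuv), hdeg v]
        omega
      · rw [rowSum_tog_ne M u v hiu hiv, hdeg i, hbne i hiu hiv]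
  | true =>
    -- need a 2-switch first
    have hExy : ∃ x y : Fin n, M x y = true ∧ M u x = false ∧ x ≠ u
        ∧ M v y = false ∧ y ≠ v := by
      by_contra hno
      push_neg at hno
      -- every vertex w ≤ v other than u, v is adjacent to u
      have hW : ∀ w : Fin n, (w:ℕ) ≤ (v:ℕ) → w ≠ u → w ≠ v → M u w = true := by
        intro w hwv hwu hwv'
        cases hMuw : M u w with
        | true => rfl
        | false =>
        exfalso
        have hawb : b w = a w := hbne w hwu hwv'
        have hwav : a v ≤ a w := hmono w v (by rw [Fin.le_def]; omega)
        cases hvw : M v w with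
        | false =>
          -- w not adjacent to v : all its neighbours are neighbours of v
          have hex : ∃ z, M w z = true := by
            apply exists_true_of_rowsum_pos
            show 0 < rowSum M w
            rw [hdeg w, hawb]
            omega
          obtain ⟨z0, hz0⟩ := hex
          have himp : ∀ z, M w z = true → M v z = true := by
            intro z hz'
            cases h' : M v z with
            | true => rfl
            | false =>
              exfalso
              have hzv := hno w z hz' hMuw hwu h'
              rw [hzv] at hz'
              rw [hsym w v, hvw] at hz'
              exact Bool.false_ne_true hz'
          have hle : rowSum M w ≤ rowSum M v := by
            unfold rowSum
            apply Finset.sum_le_sum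
            intro z _
            cases h' : M w z with
            | false => simp
            | true => simp [himp z h']
          rw [hdeg w, hdeg v, hawb] at hle
          omega
        | true =>
          -- w adjacent to v
          have himp : ∀ z, M w z = true → M v z = true ∨ z = v := by
            intro z hz'
            cases h' : M v z with
            | true => exact Or.inl rfl
            | false => exact Or.inr (hno w z hz' hMuw hwu h')
          have e1 : rowSum M w = ∑ z ∈ Finset.univ.erase w, (if M w z then 1 else 0) := by
            rw [rowSum_split M w w, hdiag w]
            simp
          have e2 : rowSum M v = 1 + ∑ z ∈ Finset.univ.erase w, (if M v z then 1 else 0) := by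
            rw [rowSum_split M v w, hvw]
            norm_num
          have e3 : ∑ z ∈ Finset.univ.erase w, (if M w z then 1 else 0)
              ≤ (∑ z ∈ Finset.univ.erase w, (if M v z then 1 else 0))
                + ∑ z ∈ Finset.univ.erase w, (if z = v then 1 else 0) := by
            rw [← Finset.sum_add_distrib]
            apply Finset.sum_le_sum
            intro z _
            cases h' : M w z with
            | false => simp
            | true =>
              rcases himp z h' with h'' | h''
              · simp [h'']
              · simp [h'']
          have e4 : ∑ z ∈ Finset.univ.erase w, (if z = v then (1:ℕ) else 0) = 1 := by
            rw [Finset.sum_ite_eq' (Finset.univ.erase w) v (fun _ => (1:ℕ))]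
            rw [if_pos (Finset.mem_erase.mpr ⟨Ne.symm hwv', Finset.mem_univ v⟩)]
          have hle : rowSum M w ≤ rowSum M v := by omega
          rw [hdeg w, hdeg v, hawb] at hle
          omega
      -- count the degree of u
      have hcnt : (v:ℕ) ≤ rowSum M u := by
        have hb2 : (∑ i : Fin n, if (i:ℕ) < (v:ℕ) + 1 ∧ i ≠ u then 1 else 0)
            ≤ rowSum M u := by
          unfold rowSum
          apply Finset.sum_le_sum
          intro z _
          by_cases hz : (z:ℕ) < (v:ℕ) + 1 ∧ z ≠ u
          · rw [if_pos hz]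
            by_cases hzv : z = v
            · simp [hzv, hMuv]
            · simp [hW z (by omega) hz.2 hzv]
          · rw [if_neg hz]
            exact Nat.zero_le _
        rw [count_erase_lt u (by omega : (v:ℕ)+1 ≤ n) (by omega)] at hb2
        omega
      rw [hdeg u] at hcnt
      omega
    obtain ⟨x, y, hxy, hux, hxu, hvy, hyv⟩ := hExy
    have hxv : x ≠ v := by
      intro h
      rw [h, hMuv] at hux
      exact Bool.false_ne_true hux.symm
    have hyu : y ≠ u := by
      intro h
      rw [h, hsym v u, hMuv] at hvy
      exact Bool.false_ne_true hvy.symm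
    have hxy_ne : x ≠ y := by
      intro h
      rw [h, hdiag y] at hxy
      exact Bool.false_ne_true hxy
    have huy : u ≠ y := Ne.symm hyu
    have hux' : u ≠ x := Ne.symm hxu
    have hvx : v ≠ x := Ne.symm hxv
    have hvy' : v ≠ y := Ne.symm hyv
    have hyx : y ≠ x := Ne.symm hxy_ne
    set M1 := tog M x y with hM1
    set M2 := tog M1 u x with hM2
    have hM1sym : ∀ i j, M1 i j = M1 j i := tog_symm M x y hsym
    have hM2sym : ∀ i j, M2 i j = M2 j i := tog_symm M1 u x hM1sym
    have hM1diag : ∀ i, M1 i i = false :=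
      fun i => (tog_diag M x y hxy_ne i).trans (hdiag i)
    have hM2diag : ∀ i, M2 i i = false :=
      fun i => (tog_diag M1 u x hux' i).trans (hM1diag i)
    have hM1ux : M1 u x = M u x :=
      tog_apply_ne M x y (by rintro (⟨h1, h2⟩ | ⟨h1, h2⟩) <;> [exact hux' h1; exact huy h1])
    have hM1vy : M1 v y = M v y :=
      tog_apply_ne M x y (by rintro (⟨h1, h2⟩ | ⟨h1, h2⟩) <;> [exact hvx h1; exact hvy' h1])
    have hM2vy : M2 v y = M1 v y :=
      tog_apply_ne M1 u x (by rintro (⟨h1, h2⟩ | ⟨h1, h2⟩) <;> [exact hne_uv h1.symm; exact hvx h1])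
    have hM1xu : M1 x u = M x u :=
      tog_apply_ne M x y (by rintro (⟨h1, h2⟩ | ⟨h1, h2⟩) <;> [exact huy h2; exact hxy_ne h1])
    have hM2yv : M2 y v = M1 y v :=
      tog_apply_ne M1 u x (by rintro (⟨h1, h2⟩ | ⟨h1, h2⟩) <;> [exact hyu h1; exact hyx h1])
    have hM1yv : M1 y v = M y v :=
      tog_apply_ne M x y (by rintro (⟨h1, h2⟩ | ⟨h1, h2⟩) <;> [exact hyx h1; exact hvx h2])
    refine Nat.card_pos_iff.mpr ⟨⟨⟨tog M2 v y,
      tog_symm M2 v y hM2sym,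
      (fun i => (tog_diag M2 v y hvy' i).trans (hM2diag i)), fun i => ?_⟩⟩, inferInstance⟩
    by_cases hiu : i = u
    · rw [hiu, rowSum_tog_ne M2 v y hne_uv huy,
        rowSum_tog_left_add M1 u x hux' (by rw [hM1ux]; exact hux),
        rowSum_tog_ne M x y hux' huy, hdeg u]
      omega
    · by_cases hiv : i = v
      · rw [hiv, rowSum_tog_left_add M2 v y hvy' (by rw [hM2vy, hM1vy]; exact hvy),
          rowSum_tog_ne M1 u x hne_uv.symm hvx,
          rowSum_tog_ne M x y hvx hvy', hdeg v]
        omega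
      · by_cases hix : i = x
        · have h1 := rowSum_tog_right_add M1 u x hux'
            (by rw [hM1xu, hsym x u]; exact hux)
          have h2 := rowSum_tog_left_sub M x y hxy_ne hxy
          rw [← hM1] at h2
          rw [hdeg x, hbne x hxu hxv] at h2
          rw [hix, rowSum_tog_ne M2 v y hxv hxy_ne, h1]
          omega
        · by_cases hiy : i = y
          · have h1 := rowSum_tog_right_add M2 v y hvy'
              (by rw [hM2yv, hM1yv, hsym y v]; exact hvy)
            have h2 := rowSum_tog_right_sub M x y hxy_ne (by rw [hsym y x]; exact hxy)
            rw [← hM1] at h2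
            rw [hdeg y, hbne y hyu hyv] at h2
            rw [hiy, h1, rowSum_tog_ne M1 u x hyu hyx]
            omega
          · rw [rowSum_tog_ne M2 v y hiv hiy, rowSum_tog_ne M1 u x hiu hix,
              rowSum_tog_ne M x y hix hiy, hdeg i, hbne i hiu hiv]


lemma graphic_zero {n : ℕ} (a : Fin n → ℕ) (h : ∑ i, a i = 0) : Graphic a := by
  refine Nat.card_pos_iff.mpr ⟨⟨⟨fun _ _ => false, fun i j => rfl, fun i => rfl,
    fun i => ?_⟩⟩, inferInstance⟩
  have h0 : a i = 0 := by
    have := (Finset.sum_eq_zero_iff.mp h) i (Finset.mem_univ i)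
    exact this
  rw [h0]
  unfold rowSum
  simp

theorem suff_main {n : ℕ} : ∀ N : ℕ, ∀ a : Fin n → ℕ, (∑ i, a i) ≤ N → Nonincreasing a →
    Even (∑ i, a i) → (∀ k ≤ n, partSum a k ≤ egR a k) → Graphic a := by
  intro N
  induction N with
  | zero =>
    intro a hN _ _ _
    exact graphic_zero a (by omega)
  | succ N ih =>
    intro a hN hmono heven hEG
    by_cases h0 : ∑ i, a i = 0
    · exact graphic_zero a h0
    have hn0 : 0 < n := by
      rcases Nat.eq_zero_or_pos n with hn | hn
      · exfalso
        apply h0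
        subst hn
        simp
      · exact hn
    obtain ⟨i0, -, hi0⟩ := Finset.exists_ne_zero_of_sum_ne_zero h0
    have hfil : (Finset.univ.filter (fun i : Fin n => 0 < a i)).Nonempty :=
      ⟨i0, Finset.mem_filter.mpr ⟨Finset.mem_univ _, Nat.pos_of_ne_zero hi0⟩⟩
    set v := Finset.max' _ hfil with hvdef
    have hv_mem := Finset.max'_mem _ hfil
    have hv_pos : 0 < a v := (Finset.mem_filter.mp hv_mem).2
    have hv_max : ∀ i : Fin n, 0 < a i → i ≤ v := fun i hi =>
      Finset.le_max' _ i (Finset.mem_filter.mpr ⟨Finset.mem_univ _, hi⟩)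
    have hzero : ∀ i : Fin n, (v:ℕ) < (i:ℕ) → a i = 0 := by
      intro i hi
      by_contra hne
      have h := hv_max i (Nat.pos_of_ne_zero hne)
      rw [Fin.le_def] at h
      omega
    have hvn : (v:ℕ) < n := v.isLt
    set z0 : Fin n := ⟨0, hn0⟩ with hz0def
    have hz0v : (z0:ℕ) = 0 := rfl
    have hmax0 : ∀ i, a i ≤ a z0 := fun i =>
      hmono z0 i (by rw [Fin.le_def, hz0v]; exact Nat.zero_le _)
    have hps1 : partSum a 1 = a z0 := by
      unfold partSum
      rw [show (∑ i : Fin n, if (i:ℕ) < 1 then a i else 0)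
          = ∑ i : Fin n, (if i = z0 then a z0 else 0) from
        Finset.sum_congr rfl (fun i _ => by
          by_cases h : i = z0
          · rw [h]
            simp [hz0v]
          · have hne : ¬ (i:ℕ) < 1 := by
              intro hc
              exact h (Fin.ext (by omega))
            rw [if_neg hne, if_neg h])]
      rw [Finset.sum_ite_eq' Finset.univ z0 (fun _ => a z0)]
      simp
    have hegR1 : egR a 1 ≤ (v:ℕ) := by
      unfold egR
      calc (∑ i : Fin n, if (i:ℕ) < 1 then min (a i) (1-1) else min (a i) 1)
          ≤ ∑ i : Fin n, (if 1 ≤ (i:ℕ) ∧ (i:ℕ) < (v:ℕ)+1 then 1 else 0) := by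
            apply Finset.sum_le_sum
            intro i _
            by_cases h : (i:ℕ) < 1
            · rw [if_pos h]
              have : min (a i) (1-1) = 0 := by omega
              rw [this]
              exact Nat.zero_le _
            · rw [if_neg h]
              by_cases h2 : (i:ℕ) < (v:ℕ)+1
              · rw [if_pos ⟨by omega, h2⟩]
                omega
              · rw [if_neg (by omega)]
                have := hzero i (by omega)
                omega
        _ = (v:ℕ) + 1 - 1 := sum_if_window 1 ((v:ℕ)+1) (by omega)
        _ = (v:ℕ) := by omega
    have ha0v : a z0 ≤ (v:ℕ) := by
      have := hEG 1 hn0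
      omega
    have hv1 : 1 ≤ (v:ℕ) := by
      have := hmax0 v
      omega
    -- a v ≤ v
    have hlow : ((v:ℕ)+1) * a v ≤ partSum a ((v:ℕ)+1) := by
      unfold partSum
      rw [← sum_const_below (show (v:ℕ)+1 ≤ n by omega) (a v)]
      apply Finset.sum_le_sum
      intro i _
      by_cases h : (i:ℕ) < (v:ℕ)+1
      · rw [if_pos h, if_pos h]
        exact hmono i v (by rw [Fin.le_def]; omega)
      · rw [if_neg h, if_neg h]
    have hhigh : egR a ((v:ℕ)+1) ≤ ((v:ℕ)+1) * (v:ℕ) := by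
      unfold egR
      rw [← sum_const_below (show (v:ℕ)+1 ≤ n by omega) (v:ℕ)]
      apply Finset.sum_le_sum
      intro i _
      by_cases h : (i:ℕ) < (v:ℕ)+1
      · rw [if_pos h, if_pos h]
        omega
      · rw [if_neg h, if_neg h]
        have := hzero i (by omega)
        omega
    have hav_le : a v ≤ (v:ℕ) := by
      have hEGv := hEG ((v:ℕ)+1) (by omega)
      exact Nat.le_of_mul_le_mul_left (by omega) (by omega : 0 < (v:ℕ)+1)
    -- the pivot u
    have hfil2 : (Finset.univ.filter (fun i : Fin n => a i = a z0)).Nonempty :=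
      ⟨z0, Finset.mem_filter.mpr ⟨Finset.mem_univ _, rfl⟩⟩
    set t := Finset.max' _ hfil2 with htdef
    have ht_mem := Finset.max'_mem _ hfil2
    have hta : a t = a z0 := (Finset.mem_filter.mp ht_mem).2
    have ht_max : ∀ i : Fin n, a i = a z0 → i ≤ t := fun i hi =>
      Finset.le_max' _ i (Finset.mem_filter.mpr ⟨Finset.mem_univ _, hi⟩)
    have htv : (t:ℕ) ≤ (v:ℕ) := by
      have h := hv_max t (by rw [hta]; have := hmax0 v; omega)
      rw [Fin.le_def] at h
      exact h
    obtain ⟨u, huv, hau, hdrop⟩ : ∃ u : Fin n, (u:ℕ) < (v:ℕ) ∧ a u = a z0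
        ∧ ∀ j : Fin n, (u:ℕ) < (j:ℕ) → j ≠ v → a j < a z0 := by
      by_cases hteq : (t:ℕ) = (v:ℕ)
      · refine ⟨⟨(v:ℕ)-1, by omega⟩, by show (v:ℕ)-1 < (v:ℕ); omega, ?_, ?_⟩
        · have h1 : a (⟨(v:ℕ)-1, by omega⟩ : Fin n) ≤ a z0 := hmax0 _
          have h2 : a t ≤ a (⟨(v:ℕ)-1, by omega⟩ : Fin n) :=
            hmono _ t (by rw [Fin.le_def]; show (v:ℕ)-1 ≤ (t:ℕ); omega)
          omega
        · intro j hj hjv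
          have hj' : (v:ℕ)-1 < (j:ℕ) := hj
          have hjne : (j:ℕ) ≠ (v:ℕ) := fun hc => hjv (Fin.ext hc)
          rw [hzero j (by omega)]
          have := hmax0 v
          omega
      · refine ⟨t, by omega, hta, ?_⟩
        intro j hj hjv
        have hle := hmax0 j
        rcases Nat.lt_or_ge (a j) (a z0) with h | h
        · exact h
        · exfalso
          have h2 := ht_max j (by omega)
          rw [Fin.le_def] at h2
          omega
    have hu_pos : 0 < a u := by
      rw [hau]
      have := hmax0 v
      omega
    have hne_uv : u ≠ v := fun h => by rw [h] at huv; omega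
    set b := fun i : Fin n => if i = u ∨ i = v then a i - 1 else a i with hbdef
    have hbu : b u = a u - 1 := by rw [hbdef]; simp
    have hbv : b v = a v - 1 := by rw [hbdef]; simp
    have hbne : ∀ i, i ≠ u → i ≠ v → b i = a i := fun i h1 h2 => by
      rw [hbdef]
      simp [h1, h2]
    have hble : ∀ j, b j ≤ a j := fun j => by
      rw [hbdef]
      dsimp only
      split <;> omega
    have hblock : ∀ i : Fin n, (i:ℕ) ≤ (u:ℕ) → a i = a u := by
      intro i hi
      have h1 : a i ≤ a z0 := hmax0 i
      have h2 : a u ≤ a i := hmono i u (by rw [Fin.le_def]; omega)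
      omega
    -- b is nonincreasing
    have hmono_b : Nonincreasing b := by
      intro i j hij
      rw [Fin.le_def] at hij
      by_cases hiu : i = u
      · by_cases hju : j = u
        · rw [hiu, hju]
        · by_cases hjv : j = v
          · rw [hiu, hjv, hbu, hbv]
            have := hmono u v (by rw [Fin.le_def]; omega)
            omega
          · rw [hbne j hju hjv, hiu, hbu]
            have hjne : (j:ℕ) ≠ (u:ℕ) := fun hc => hju (Fin.ext hc)
            have hj2 : a j < a z0 := hdrop j (by rw [hiu] at hij; omega) hjv
            omega
      · by_cases hiv : i = v
        · by_cases hjv : j = v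
          · rw [hjv, hiv]
          · have hjne : (j:ℕ) ≠ (v:ℕ) := fun hc => hjv (Fin.ext hc)
            have hj0 := hzero j (by rw [hiv] at hij; omega)
            have h3 := hble j
            omega
        · rw [hbne i hiu hiv]
          have h3 := hble j
          have h4 := hmono i j (by rw [Fin.le_def]; omega)
          omega
    -- b satisfies EG
    have hEG_b : ∀ k ≤ n, partSum b k ≤ egR b k := by
      intro k hk
      have hstep := eg_step a u v hmono huv hblock hv_pos heven hEG hk
      have hI1 : partSum a k = partSum b k
          + ((if (u:ℕ) < k then 1 else 0) + (if (v:ℕ) < k then 1 else 0)) := by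
        unfold partSum
        have h1 := sum_split_two hne_uv (fun i : Fin n => if (i:ℕ) < k then a i else 0)
        have h2 := sum_split_two hne_uv (fun i : Fin n => if (i:ℕ) < k then b i else 0)
        beta_reduce at h1 h2
        have h3 : ∑ i ∈ (Finset.univ.erase u).erase v, (if (i:ℕ) < k then a i else 0)
            = ∑ i ∈ (Finset.univ.erase u).erase v, (if (i:ℕ) < k then b i else 0) :=
          Finset.sum_congr rfl (fun i hi => by
            have hm := Finset.mem_erase.mp hi
            have hm2 := Finset.mem_erase.mp hm.2
            rw [hbne i hm2.1 hm.1])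
        by_cases h4 : (u:ℕ) < k <;> by_cases h5 : (v:ℕ) < k <;>
          simp only [h4, h5, if_true, if_false] at h1 h2 ⊢ <;>
          omega
      have hI2 : egR a k ≤ egR b k
          + ((if a u ≤ (if (u:ℕ) < k then k-1 else k) then 1 else 0)
            + (if a v ≤ (if (v:ℕ) < k then k-1 else k) then 1 else 0)) := by
        unfold egR
        have h1 := sum_split_two hne_uv
          (fun i : Fin n => if (i:ℕ) < k then min (a i) (k-1) else min (a i) k)
        have h2 := sum_split_two hne_uv
          (fun i : Fin n => if (i:ℕ) < k then min (b i) (k-1) else min (b i) k)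
        beta_reduce at h1 h2
        have h3 : ∑ i ∈ (Finset.univ.erase u).erase v,
              (if (i:ℕ) < k then min (a i) (k-1) else min (a i) k)
            = ∑ i ∈ (Finset.univ.erase u).erase v,
              (if (i:ℕ) < k then min (b i) (k-1) else min (b i) k) :=
          Finset.sum_congr rfl (fun i hi => by
            have hm := Finset.mem_erase.mp hi
            have hm2 := Finset.mem_erase.mp hm.2
            rw [hbne i hm2.1 hm.1])
        rw [hbu, hbv] at h2
        by_cases h4 : (u:ℕ) < k <;> by_cases h5 : (v:ℕ) < k <;>
          simp only [h4, h5, if_true, if_false] at h1 h2 ⊢ <;>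
          split_ifs <;>
          omega
      split_ifs at hstep hI1 hI2 <;> omega
    have heven_b : Even (∑ i, b i) := by
      have h1 := sum_split_two hne_uv b
      have h2 := sum_split_two hne_uv a
      have h3 : ∑ i ∈ (Finset.univ.erase u).erase v, b i
          = ∑ i ∈ (Finset.univ.erase u).erase v, a i :=
        Finset.sum_congr rfl (fun i hi => by
          have hm := Finset.mem_erase.mp hi
          have hm2 := Finset.mem_erase.mp hm.2
          exact hbne i hm2.1 hm.1)
      obtain ⟨c, hc⟩ := heven
      refine ⟨c - 1, by omega⟩
    have hsum_b : ∑ i, b i + 2 = ∑ i, a i := by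
      have h1 := sum_split_two hne_uv b
      have h2 := sum_split_two hne_uv a
      have h3 : ∑ i ∈ (Finset.univ.erase u).erase v, b i
          = ∑ i ∈ (Finset.univ.erase u).erase v, a i :=
        Finset.sum_congr rfl (fun i hi => by
          have hm := Finset.mem_erase.mp hi
          have hm2 := Finset.mem_erase.mp hm.2
          exact hbne i hm2.1 hm.1)
      omega
    have hGb := ih b (by omega) hmono_b heven_b hEG_b
    exact graphic_step a b u v hmono huv hv_pos hzero
      (by rw [hau]; exact ha0v) (by omega) (by omega) hbne hGb


theorem stmt7 {n : ℕ} (a : Fin n → ℕ)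
    (hmono : Nonincreasing a) (heven : Even (∑ i, a i)) :
    Graphic a ↔ Majorized a (thresholdList a) := by
  constructor
  · intro hG
    obtain ⟨⟨M, hsym, hdiag, hdeg⟩⟩ :
        Nonempty {M : Fin n → Fin n → Bool //
          (∀ i j, M i j = M j i) ∧ (∀ i, M i i = false) ∧ (∀ i, rowSum M i = a i)} :=
      (Nat.card_pos_iff.mp hG).1
    rw [majorized_iff_eg]
    refine ⟨fun i => by rw [← hdeg i]; exact rowSum_le_pred M hdiag i,
      fun k hk => partSum_le_egR M hsym hdiag a hdeg hk⟩
  · intro hM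
    rw [majorized_iff_eg] at hM
    exact suff_main (∑ i, a i) a le_rfl hmono heven hM.2
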